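/- arXiv:2403.00943 — 4 statements merged into one kernel-verified Lean document; each statement's English description precedes it below -/
import Mathlib

section
/- For every integer c ≥ 2, every {−1, 0, c}-submodular valuation on a finite set of items is order neutral. -/
/-- The multiset of marginal gains of a valuation `v` along a list of items,
where items later in the list are added first (the head of the list is added last). -/
def marginalGains {O : Type*} [DecidableEq O] (v : Finset O → ℤ) : List O → Multiset ℤ
  | [] => 0
  | o :: l => (v (insert o l.toFinset) - v l.toFinset) ::ₘ marginalGains v l

private lemma key_arith (c a b a' b' : ℤ) (hc : 2 ≤ c)
    (ha : a = -1 ∨ a = 0 ∨ a = c) (hb : b = -1 ∨ b = 0 ∨ b = c)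
    (ha' : a' = -1 ∨ a' = 0 ∨ a' = c) (hb' : b' = -1 ∨ b' = 0 ∨ b' = c)
    (hsum : a + b' = b + a') (h1 : a' ≤ a) (h2 : b' ≤ b) :
    (a' = a ∧ b' = b) ∨ (b' = a' ∧ a = b) := by
  rcases ha with rfl | rfl | rfl <;> rcases hb with rfl | rfl | rfl <;>
    rcases ha' with h | h | h <;> rcases hb' with h' | h' | h' <;> omega

/-- For every integer `c ≥ 2`, every `{-1, 0, c}`-submodular valuation on a finite set of
items is order neutral: any two enumerations of the same set of items yield the same
multiset of marginal gains. -/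
theorem stmt0 (c : ℤ) (hc : 2 ≤ c) (O : Type*) [Fintype O] [DecidableEq O]
    (v : Finset O → ℤ)
    (hempty : v ∅ = 0)
    (hmarg : ∀ (o : O) (S : Finset O), o ∉ S →
      v (insert o S) - v S ∈ ({-1, 0, c} : Set ℤ))
    (hsub : ∀ (o : O) (S T : Finset O), S ⊆ T → o ∉ T →
      v (insert o T) - v T ≤ v (insert o S) - v S) :
    ∀ (l₁ l₂ : List O), l₁.Nodup → l₂.Nodup → l₁.toFinset = l₂.toFinset →
      marginalGains v l₁ = marginalGains v l₂ := by
  have main : ∀ l₁ l₂ : List O, l₁.Perm l₂ → l₁.Nodup →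
      marginalGains v l₁ = marginalGains v l₂ := by
    intro l₁ l₂ h
    induction h with
    | nil => intro _; rfl
    | cons x h ih =>
        intro hn
        simp only [marginalGains, List.toFinset_cons]
        rw [List.toFinset_eq_of_perm _ _ h, ih (List.nodup_cons.mp hn).2]
    | swap x y l =>
        intro hn
        -- hn : (y :: x :: l).Nodup
        have hy : y ∉ x :: l := (List.nodup_cons.mp hn).1
        have hn2 := (List.nodup_cons.mp hn).2
        have hx : x ∉ l := (List.nodup_cons.mp hn2).1
        have hyx : y ≠ x := fun h => hy (h ▸ (List.mem_cons_self : x ∈ x :: l))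
        have hyl : y ∉ l := fun h => hy (List.mem_cons_of_mem x h)
        set T := l.toFinset with hT
        have hxT : x ∉ T := fun h => hx (List.mem_toFinset.mp h)
        have hyT : y ∉ T := fun h => hyl (List.mem_toFinset.mp h)
        have hxyT : x ∉ insert y T := by
          simp only [Finset.mem_insert]; rintro (h | h); exact hyx h.symm; exact hxT h
        have hyxT : y ∉ insert x T := by
          simp only [Finset.mem_insert]; rintro (h | h); exact hyx h; exact hyT h
        set a := v (insert x T) - v T with haD
        set b := v (insert y T) - v T with hbD
        set a' := v (insert x (insert y T)) - v (insert y T) with ha'D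
        set b' := v (insert y (insert x T)) - v (insert x T) with hb'D
        have hcomm : insert x (insert y T) = insert y (insert x T) := Finset.insert_comm x y T
        have hsum : a + b' = b + a' := by rw [haD, hbD, ha'D, hb'D, hcomm]; ring
        have h1 : a' ≤ a := hsub x T (insert y T) (Finset.subset_insert _ _) hxyT
        have h2 : b' ≤ b := hsub y T (insert x T) (Finset.subset_insert _ _) hyxT
        have ha := hmarg x T hxT
        have hb := hmarg y T hyT
        have ha' := hmarg x (insert y T) hxyT
        have hb' := hmarg y (insert x T) hyxT
        simp only [Set.mem_insert_iff, Set.mem_singleton_iff] at ha hb ha' hb'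
        have hkey := key_arith c a b a' b' hc ha hb ha' hb' hsum h1 h2
        simp only [marginalGains, List.toFinset_cons, ← haD, ← hbD]
        rw [show v (insert y (insert x T)) - v (insert x T) = b' from rfl,
            show v (insert x (insert y T)) - v (insert y T) = a' from rfl]
        rcases hkey with ⟨e1, e2⟩ | ⟨e1, e2⟩
        · rw [e1, e2]; exact Multiset.cons_swap _ _ _
        · rw [e1]; exact congrArg (a' ::ₘ ·) (congrArg (· ::ₘ marginalGains v l) e2)
    | trans h1 h2 ih1 ih2 =>
        intro hn
        exact (ih1 hn).trans (ih2 (h1.nodup_iff.mp hn))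
  intro l₁ l₂ hn₁ hn₂ heq
  exact main l₁ l₂ (List.perm_of_nodup_nodup_toFinset_eq hn₁ hn₂ heq) hn₁
end

section
/- There exist a finite set O of items and a {−1, 0, 1}-submodular valuation v on O that is not order neutral. Hence the statement '{−1, 0, c}-submodular valuations are order neutral' fails for c = 1. -/
/-- There exist a finite set of items and a `{-1, 0, 1}`-submodular valuation on it that
is *not* order neutral: some set of items has two enumerations yielding different
multisets of marginal gains. Hence order neutrality of `{-1, 0, c}`-submodular
valuations fails for `c = 1`. -/
theorem stmt3 :
    ∃ (n : ℕ) (v : Finset (Fin n) → ℤ),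
      v ∅ = 0 ∧
      (∀ (o : Fin n) (S : Finset (Fin n)), o ∉ S →
        v (insert o S) - v S ∈ ({-1, 0, 1} : Set ℤ)) ∧
      (∀ (o : Fin n) (S T : Finset (Fin n)), S ⊆ T → o ∉ T →
        v (insert o T) - v T ≤ v (insert o S) - v S) ∧
      ¬ (∀ (l₁ l₂ : List (Fin n)), l₁.Nodup → l₂.Nodup → l₁.toFinset = l₂.toFinset →
          marginalGains v l₁ = marginalGains v l₂) := by
  refine ⟨2, fun S => if S = {0} then 1 else 0, by decide, ?_, by decide, ?_⟩
  · intro o S _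
    simp only [Set.mem_insert_iff, Set.mem_singleton_iff]
    revert o S; decide
  · intro h
    have := h [0, 1] [1, 0] (by decide) (by decide) (by decide)
    simp [marginalGains, List.toFinset] at this
    revert this; decide
end

section
/- Let k and t be natural numbers with t ≥ 1, and let u_1, …, u_k be positive integers such that u_i ≠ t for every i and u_1 + ⋯ + u_k ≤ k·t. Then (u_1 · u_2 ⋯ u_k)^2 ≤ (t^2 − 1)^k; that is, the product of the u_i is at most (t^2 − 1)^{k/2}. -/
open Finset

lemma low_aux : ∀ (e v : ℕ), 1 ≤ v → v ^ 2 * (v + e + 2) ^ e ≤ (v + e) ^ (e + 2) := by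
  intro e
  induction e with
  | zero => intro v hv; simp
  | succ e ih =>
    intro v hv
    have h1 := ih (v + 1) (by omega)
    have key : v ^ 2 * (v + e + 3) ≤ (v + 1) ^ 2 * (v + e + 1) := by
      have h : (v + 1) ^ 2 * (v + e + 1) = v ^ 2 * (v + e + 3) + (2*v*e + 3*v + e + 1) := by
        ring
      rw [h]; exact Nat.le_add_right _ _
    calc v ^ 2 * (v + (e + 1) + 2) ^ (e + 1)
        = (v ^ 2 * (v + e + 3)) * (v + e + 3) ^ e := by ring
      _ ≤ ((v + 1) ^ 2 * (v + e + 1)) * (v + e + 3) ^ e := Nat.mul_le_mul_right _ key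
      _ = ((v + 1) ^ 2 * (v + 1 + e + 2) ^ e) * (v + e + 1) := by ring_nf
      _ ≤ (v + 1 + e) ^ (e + 2) * (v + e + 1) := Nat.mul_le_mul_right _ h1
      _ = (v + (e + 1)) ^ (e + 1 + 2) := by ring_nf

lemma high_aux : ∀ (e s : ℕ), (s + e + 2) ^ 2 * s ^ e ≤ (s + 2) ^ (e + 2) := by
  intro e
  induction e with
  | zero => intro s; simp
  | succ e ih =>
    intro s
    have h1 := ih s
    have key : (s + e + 3) ^ 2 * s ≤ (s + e + 2) ^ 2 * (s + 2) := by
      have h : (s + e + 2) ^ 2 * (s + 2) =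
          (s + e + 3) ^ 2 * s + (2*s*e + 3*s + 2*e^2 + 8*e + 8) := by ring
      rw [h]; exact Nat.le_add_right _ _
    calc (s + (e + 1) + 2) ^ 2 * s ^ (e + 1)
        = ((s + e + 3) ^ 2 * s) * s ^ e := by ring
      _ ≤ ((s + e + 2) ^ 2 * (s + 2)) * s ^ e := Nat.mul_le_mul_right _ key
      _ = ((s + e + 2) ^ 2 * s ^ e) * (s + 2) := by ring
      _ ≤ (s + 2) ^ (e + 2) * (s + 2) := Nat.mul_le_mul_right _ h1
      _ = (s + 2) ^ (e + 1 + 2) := by ring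

lemma key_aux (t u : ℕ) (ht : 2 ≤ t) (hu : 1 ≤ u) (hne : u ≠ t) :
    u ^ 2 * (t + 1) ^ t * (t - 1) ^ u ≤ (t ^ 2 - 1) * (t - 1) ^ t * (t + 1) ^ u := by
  obtain ⟨s, rfl⟩ : ∃ s, t = s + 1 := ⟨t - 1, by omega⟩
  have hs : 1 ≤ s := by omega
  have h2 : (s + 1) ^ 2 - 1 = s * (s + 2) := by
    have : (s + 1) ^ 2 = s * (s + 2) + 1 := by ring
    omega
  rw [h2]
  simp only [Nat.add_sub_cancel]
  rcases lt_or_gt_of_ne hne with hlt | hgt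
  · obtain ⟨e, rfl⟩ : ∃ e, s = u + e := ⟨s - u, by omega⟩
    have h := low_aux e u hu
    calc u ^ 2 * (u + e + 1 + 1) ^ (u + e + 1) * (u + e) ^ u
        = (u ^ 2 * (u + e + 2) ^ e) * ((u + e + 2) ^ (u + 1) * (u + e) ^ u) := by ring
      _ ≤ (u + e) ^ (e + 2) * ((u + e + 2) ^ (u + 1) * (u + e) ^ u) :=
          Nat.mul_le_mul_right _ h
      _ = (u + e) * (u + e + 1 + 1) * (u + e) ^ (u + e + 1) * (u + e + 1 + 1) ^ u := by ring
  · obtain ⟨e, rfl⟩ : ∃ e, u = s + e + 2 := ⟨u - s - 2, by omega⟩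
    have h := high_aux e s
    calc (s + e + 2) ^ 2 * (s + 1 + 1) ^ (s + 1) * s ^ (s + e + 2)
        = ((s + e + 2) ^ 2 * s ^ e) * ((s + 2) ^ (s + 1) * s ^ (s + 2)) := by ring
      _ ≤ (s + 2) ^ (e + 2) * ((s + 2) ^ (s + 1) * s ^ (s + 2)) :=
          Nat.mul_le_mul_right _ h
      _ = s * (s + 1 + 1) * s ^ (s + 1) * (s + 1 + 1) ^ (s + e + 2) := by ring

/-- Let `k, t` be natural numbers with `t ≥ 1`, and let `u_1, …, u_k` be positive
natural numbers, each different from `t`, whose sum is at most `k * t`. Then the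
square of their product is at most `(t² - 1)^k`. -/
theorem stmt6 (k t : ℕ) (ht : 1 ≤ t) (u : Fin k → ℕ)
    (hpos : ∀ i, 0 < u i) (hne : ∀ i, u i ≠ t)
    (hsum : ∑ i, u i ≤ k * t) :
    (∏ i, u i) ^ 2 ≤ (t ^ 2 - 1) ^ k := by
  rcases eq_or_lt_of_le ht with h1 | ht2
  · subst h1
    have hk : k = 0 := by
      by_contra hk
      have h2 : ∀ i, 2 ≤ u i := fun i => by have := hpos i; have := hne i; omega
      have : k * 2 ≤ ∑ i, u i := by
        calc k * 2 = ∑ _i : Fin k, 2 := by simp [mul_comm]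
          _ ≤ ∑ i, u i := Finset.sum_le_sum fun i _ => h2 i
      omega
    subst hk
    simp
  · set S := ∑ i, u i with hS
    have hprod : ∏ i, ((u i) ^ 2 * (t + 1) ^ t * (t - 1) ^ (u i)) ≤
        ∏ i, ((t ^ 2 - 1) * (t - 1) ^ t * (t + 1) ^ (u i)) :=
      Finset.prod_le_prod (fun i _ => Nat.zero_le _)
        (fun i _ => key_aux t (u i) ht2 (hpos i) (hne i))
    have hL : ∏ i, ((u i) ^ 2 * (t + 1) ^ t * (t - 1) ^ (u i)) =
        (∏ i, u i) ^ 2 * ((t + 1) ^ t) ^ k * (t - 1) ^ S := by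
      simp [Finset.prod_mul_distrib, Finset.prod_pow, Finset.prod_pow_eq_pow_sum,
        Finset.card_univ, mul_pow, ← hS]
    have hR : ∏ i, ((t ^ 2 - 1) * (t - 1) ^ t * (t + 1) ^ (u i)) =
        (t ^ 2 - 1) ^ k * ((t - 1) ^ t) ^ k * (t + 1) ^ S := by
      simp [Finset.prod_mul_distrib, Finset.prod_pow_eq_pow_sum, Finset.card_univ, mul_pow, ← hS]
    rw [hL, hR] at hprod
    have hsum' : S ≤ t * k := le_of_le_of_eq hsum (mul_comm k t)
    obtain ⟨d, hd⟩ : ∃ d, t * k = S + d := ⟨t * k - S, by omega⟩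
    have hmid : (t - 1) ^ (t * k) * (t + 1) ^ S ≤ (t - 1) ^ S * (t + 1) ^ (t * k) := by
      rw [hd, pow_add, pow_add]
      have h3 : (t - 1) ^ d ≤ (t + 1) ^ d := Nat.pow_le_pow_left (by omega) d
      calc (t - 1) ^ S * (t - 1) ^ d * (t + 1) ^ S
          ≤ (t - 1) ^ S * (t + 1) ^ d * (t + 1) ^ S :=
            Nat.mul_le_mul_right _ (Nat.mul_le_mul_left _ h3)
        _ = (t - 1) ^ S * ((t + 1) ^ S * (t + 1) ^ d) := by ring
    have hM : 0 < (t + 1) ^ (t * k) * (t - 1) ^ S :=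
      Nat.mul_pos (Nat.pow_pos (by omega)) (Nat.pow_pos (by omega))
    apply Nat.le_of_mul_le_mul_right _ hM
    calc (∏ i, u i) ^ 2 * ((t + 1) ^ (t * k) * (t - 1) ^ S)
        = (∏ i, u i) ^ 2 * ((t + 1) ^ t) ^ k * (t - 1) ^ S := by
          rw [← pow_mul]; ring
      _ ≤ (t ^ 2 - 1) ^ k * ((t - 1) ^ t) ^ k * (t + 1) ^ S := hprod
      _ = (t ^ 2 - 1) ^ k * ((t - 1) ^ (t * k) * (t + 1) ^ S) := by
          rw [pow_mul]; ring
      _ ≤ (t ^ 2 - 1) ^ k * ((t - 1) ^ S * (t + 1) ^ (t * k)) :=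
          Nat.mul_le_mul_left _ hmid
      _ = (t ^ 2 - 1) ^ k * ((t + 1) ^ (t * k) * (t - 1) ^ S) := by ring
end

section
/- Fix integers a, b, c with 0 ≤ a < b < c and c ≥ 2b, and let φ be a 2P2N-3SAT instance with n variables and m clauses. Then φ is satisfiable if and only if the allocation instance I(φ) admits an allocation whose egalitarian welfare is at least 2b. (Moreover, when φ is unsatisfiable, every allocation of I(φ) has egalitarian welfare at most b + a.) -/
open Finset

/-- Agents of the allocation instance `I(φ)` built from a 2P2N-3SAT instance with
`n` variables and `m` clauses: the positive-literal sink agent `pos i` and the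
negative-literal sink agent `neg i` for each variable `i`, one clause agent for each
clause, and `2n - m` dummy agents. -/
abbrev SatAgent (n m : ℕ) := (Fin n ⊕ Fin n) ⊕ (Fin m ⊕ Fin (2 * n - m))

/-- Items of the allocation instance `I(φ)`: literal items `(s, copy, i)` (two copies,
indexed by a `Bool`, of each positive literal `s = true` and negative literal
`s = false` of each variable `i`), a sink-clogger item for each variable, and one
special item for each clause agent and each dummy agent. -/
abbrev SatItem (n m : ℕ) := (Bool × Bool × Fin n) ⊕ (Fin n ⊕ (Fin m ⊕ Fin (2 * n - m)))

/-- The additive (per-item) valuations of the instance `I(φ)`, where a clause `C j` is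
given as the set of its literals `(sign, variable)`:
`pos i` values both copies of the positive literals of `i` at `b` and `clog i` at `c`;
`neg i` values both copies of the negative literals of `i` at `b` and `clog i` at `c`;
clause agent `j` values every copy of every literal occurring in `C j` at `b` and its
own special item at `b`; each dummy agent values every literal item at `b` and its own
special item at `b`. All other values are `a`. -/
def satVal (n m : ℕ) (a b c : ℤ) (C : Fin m → Finset (Bool × Fin n)) :
    SatAgent n m → SatItem n m → ℤ
  | Sum.inl (Sum.inl i), Sum.inl (s, _, j) => if s = true ∧ j = i then b else a
  | Sum.inl (Sum.inl i), Sum.inr (Sum.inl j) => if j = i then c else a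
  | Sum.inl (Sum.inl _), Sum.inr (Sum.inr _) => a
  | Sum.inl (Sum.inr i), Sum.inl (s, _, j) => if s = false ∧ j = i then b else a
  | Sum.inl (Sum.inr i), Sum.inr (Sum.inl j) => if j = i then c else a
  | Sum.inl (Sum.inr _), Sum.inr (Sum.inr _) => a
  | Sum.inr (Sum.inl k), Sum.inl (s, _, j) => if (s, j) ∈ C k then b else a
  | Sum.inr (Sum.inl _), Sum.inr (Sum.inl _) => a
  | Sum.inr (Sum.inl k), Sum.inr (Sum.inr (Sum.inl k')) => if k' = k then b else a
  | Sum.inr (Sum.inl _), Sum.inr (Sum.inr (Sum.inr _)) => a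
  | Sum.inr (Sum.inr _), Sum.inl _ => b
  | Sum.inr (Sum.inr _), Sum.inr (Sum.inl _) => a
  | Sum.inr (Sum.inr _), Sum.inr (Sum.inr (Sum.inl _)) => a
  | Sum.inr (Sum.inr d), Sum.inr (Sum.inr (Sum.inr d')) => if d' = d then b else a

/-- The utility of agent `i` under allocation `X` (which assigns every item to exactly
one agent): the sum of `i`'s values for the items allocated to `i`. -/
def satUtil (n m : ℕ) (a b c : ℤ) (C : Fin m → Finset (Bool × Fin n))
    (X : SatItem n m → SatAgent n m) (i : SatAgent n m) : ℤ :=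
  ∑ o : SatItem n m, if X o = i then satVal n m a b c C i o else 0

section aux
variable {n m : ℕ} {a b c : ℤ} {C : Fin m → Finset (Bool × Fin n)}

lemma satVal_nonneg (hab : a < b) (hbc : b < c) :
    ∀ i o, a ≤ satVal n m a b c C i o := by
  intro i o
  rcases i with (i0 | i0) | (k | d) <;>
    rcases o with ⟨s, cpy, j⟩ | (j | (k' | d')) <;>
    simp only [satVal] <;> (try split_ifs) <;> linarith

lemma satVal_cases :
    ∀ i o, satVal n m a b c C i o = a ∨ satVal n m a b c C i o = b ∨
      (satVal n m a b c C i o = c ∧ ∃ i0 : Fin n, o = Sum.inr (Sum.inl i0) ∧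
        (i = Sum.inl (Sum.inl i0) ∨ i = Sum.inl (Sum.inr i0))) := by
  intro i o
  rcases i with (i0 | i0) | (k | d) <;>
    rcases o with ⟨s, cpy, j⟩ | (j | (k' | d')) <;>
    simp only [satVal] <;> (try split_ifs with hh) <;>
    first
      | tauto
      | (right; right; exact ⟨rfl, j, rfl, Or.inl (hh ▸ rfl)⟩)
      | (right; right; exact ⟨rfl, j, rfl, Or.inr (hh ▸ rfl)⟩)

lemma val_neg_gt (i0 : Fin n) (o : SatItem n m)
    (h : a < satVal n m a b c C (Sum.inl (Sum.inr i0)) o) :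
    o = Sum.inr (Sum.inl i0) ∨ ∃ cpy, o = Sum.inl (false, cpy, i0) := by
  rcases o with ⟨s, cpy, j⟩ | (j | (k' | d')) <;>
    simp only [satVal] at h <;> (try split_ifs at h with hh) <;>
    first
      | exact absurd h (lt_irrefl a)
      | (right; exact ⟨cpy, by simp_all⟩)
      | (left; simp_all)

lemma val_pos_gt (i0 : Fin n) (o : SatItem n m)
    (h : a < satVal n m a b c C (Sum.inl (Sum.inl i0)) o) :
    o = Sum.inr (Sum.inl i0) ∨ ∃ cpy, o = Sum.inl (true, cpy, i0) := by
  rcases o with ⟨s, cpy, j⟩ | (j | (k' | d')) <;>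
    simp only [satVal] at h <;> (try split_ifs at h with hh) <;>
    first
      | exact absurd h (lt_irrefl a)
      | (right; exact ⟨cpy, by simp_all⟩)
      | (left; simp_all)

lemma val_clause_gt (k : Fin m) (o : SatItem n m)
    (h : a < satVal n m a b c C (Sum.inr (Sum.inl k)) o) :
    (∃ s cpy i1, o = Sum.inl (s, cpy, i1) ∧ (s, i1) ∈ C k) ∨
      o = Sum.inr (Sum.inr (Sum.inl k)) := by
  rcases o with ⟨s, cpy, j⟩ | (j | (k' | d')) <;>
    simp only [satVal] at h <;> (try split_ifs at h with hh) <;>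
    first
      | exact absurd h (lt_irrefl a)
      | (left; exact ⟨s, cpy, j, rfl, hh⟩)
      | (right; simp_all)

lemma satVal_clause_le (hab : a < b) (k : Fin m) (o : SatItem n m) :
    satVal n m a b c C (Sum.inr (Sum.inl k)) o ≤ b := by
  rcases o with ⟨s, cpy, j⟩ | (j | (k' | d')) <;>
    simp only [satVal] <;> (try split_ifs) <;> linarith


lemma satUtil_eq (X : SatItem n m → SatAgent n m) (i : SatAgent n m) :
    satUtil n m a b c C X i =
      ∑ o ∈ univ.filter (fun o => X o = i), satVal n m a b c C i o := by
  rw [satUtil, Finset.sum_filter]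

lemma util_ge_one (hab : a < b) (hbc : b < c) (h0 : 0 ≤ a)
    (X : SatItem n m → SatAgent n m) {i : SatAgent n m} {o1 : SatItem n m}
    (h1 : X o1 = i) :
    satVal n m a b c C i o1 ≤ satUtil n m a b c C X i := by
  have hnn : ∀ o, (0:ℤ) ≤ if X o = i then satVal n m a b c C i o else 0 := by
    intro o; split_ifs
    · exact le_trans h0 (satVal_nonneg hab hbc i o)
    · exact le_refl 0
  have h := Finset.single_le_sum (f := fun o => if X o = i then satVal n m a b c C i o else 0)
    (fun o _ => hnn o) (Finset.mem_univ o1)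
  rw [if_pos h1] at h
  exact h

lemma util_ge_pair (hab : a < b) (hbc : b < c) (h0 : 0 ≤ a)
    (X : SatItem n m → SatAgent n m) {i : SatAgent n m} {o1 o2 : SatItem n m}
    (h12 : o1 ≠ o2) (h1 : X o1 = i) (h2 : X o2 = i) :
    satVal n m a b c C i o1 + satVal n m a b c C i o2 ≤ satUtil n m a b c C X i := by
  have hnn : ∀ o ∈ (univ : Finset (SatItem n m)),
      (0:ℤ) ≤ if X o = i then satVal n m a b c C i o else 0 := by
    intro o _; split_ifs
    · exact le_trans h0 (satVal_nonneg hab hbc i o)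
    · exact le_refl 0
  have hsub : ({o1, o2} : Finset (SatItem n m)) ⊆ univ := Finset.subset_univ _
  have hstep := Finset.sum_le_sum_of_subset_of_nonneg hsub (fun o ho _ => hnn o (Finset.mem_univ o))
  rw [Finset.sum_pair h12, if_pos h1, if_pos h2] at hstep
  exact hstep

lemma key3m4n (hcard : ∀ j, (C j).card = 3)
    (hpos : ∀ i : Fin n, (univ.filter (fun j => (true, i) ∈ C j)).card = 2)
    (hneg : ∀ i : Fin n, (univ.filter (fun j => (false, i) ∈ C j)).card = 2) :
    3 * m = 4 * n := by
  have h1 : ∀ j : Fin m, (C j).card = ∑ p : Bool × Fin n, if p ∈ C j then 1 else 0 := by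
    intro j
    rw [← Finset.card_filter]
    congr 1
    simp [Finset.filter_mem_eq_inter]
  have h2 : ∑ j : Fin m, (C j).card = ∑ p : Bool × Fin n,
      (univ.filter (fun j => p ∈ C j)).card := by
    simp only [h1, Finset.card_filter]
    exact Finset.sum_comm
  have h3 : ∑ j : Fin m, (C j).card = 3 * m := by
    simp [hcard, mul_comm]
  have h4 : ∑ p : Bool × Fin n, (univ.filter (fun j => p ∈ C j)).card = 4 * n := by
    rw [Fintype.sum_prod_type]
    simp [Fintype.sum_bool, hpos, hneg]
    ring
  omega

lemma dirB (ha : 0 ≤ a) (hab : a < b) (hbc : b < c)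
    (hcard : ∀ j, (C j).card = 3)
    (hpos : ∀ i : Fin n, (univ.filter (fun j => (true, i) ∈ C j)).card = 2)
    (hneg : ∀ i : Fin n, (univ.filter (fun j => (false, i) ∈ C j)).card = 2)
    (X : SatItem n m → SatAgent n m)
    (H : ∀ i, b + a < satUtil n m a b c C X i) :
    ∃ σ : Fin n → Bool, ∀ j : Fin m, ∃ l ∈ C j, σ l.2 = l.1 := by
  classical
  have h34 : 3 * m = 4 * n := key3m4n hcard hpos hneg
  have hm : m ≤ 2 * n := by omega
  set B : SatAgent n m → Finset (SatItem n m) :=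
      fun i => univ.filter (fun o => X o = i) with hB
  have hmemB : ∀ (o : SatItem n m) (i : SatAgent n m), o ∈ B i ↔ X o = i := by
    intro o i
    simp only [hB, Finset.mem_filter, Finset.mem_univ, true_and]
  have hutil : ∀ i, satUtil n m a b c C X i = ∑ o ∈ B i, satVal n m a b c C i o :=
    fun i => satUtil_eq X i
  have hne : ∀ i, (B i).Nonempty := by
    intro i
    by_contra h
    rw [Finset.not_nonempty_iff_eq_empty] at h
    have hu := H i
    rw [hutil i, h, Finset.sum_empty] at hu
    linarith
  set P : SatAgent n m → Prop := fun i => ∃ i0 : Fin n,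
      X (Sum.inr (Sum.inl i0)) = i ∧
      (i = Sum.inl (Sum.inl i0) ∨ i = Sum.inl (Sum.inr i0)) with hP
  -- lower bounds on bundle sizes
  have hlow : ∀ i, (if P i then 1 else 2) ≤ (B i).card := by
    intro i
    split_ifs with hPi
    · exact Finset.card_pos.mpr (hne i)
    · rcases Nat.lt_or_ge (B i).card 2 with h2 | h2
      · exfalso
        have h1 : (B i).card = 1 := by
          have := Finset.card_pos.mpr (hne i); omega
        obtain ⟨o, ho⟩ := Finset.card_eq_one.mp h1
        have hXo : X o = i := by
          have : o ∈ B i := by rw [ho]; exact Finset.mem_singleton_self o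
          exact (hmemB o i).mp this
        have hu := H i
        rw [hutil i, ho, Finset.sum_singleton] at hu
        rcases satVal_cases i o with hc | hc | ⟨hc, i0, ho0, hio⟩
        · rw [hc] at hu; linarith
        · rw [hc] at hu; linarith
        · exact hPi ⟨i0, by rw [← ho0]; exact hXo, hio⟩
      · exact h2
  -- total number of items
  have hsum : ∑ i : SatAgent n m, (B i).card = 7 * n := by
    have hfib := Finset.card_eq_sum_card_fiberwise
      (f := X) (s := (univ : Finset (SatItem n m))) (t := univ)
      (fun x _ => Finset.mem_univ (X x))
    have hcardO : (univ : Finset (SatItem n m)).card = 7 * n := by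
      rw [Finset.card_univ]
      simp [Fintype.card_sum, Fintype.card_prod]
      omega
    rw [hcardO] at hfib
    exact hfib.symm
  -- the clog owners
  set vix : SatAgent n m → ℕ := fun i => match i with
    | Sum.inl (Sum.inl i0) => i0.val
    | Sum.inl (Sum.inr i0) => i0.val
    | _ => 0 with hvix
  have hPinj : Set.InjOn vix (univ.filter P) := by
    intro i hi i' hi' hvv
    obtain ⟨i0, hX0, hsh⟩ := (Finset.mem_filter.mp hi).2
    obtain ⟨i0', hX0', hsh'⟩ := (Finset.mem_filter.mp hi').2
    have hv1 : vix i = i0.val := by rcases hsh with rfl | rfl <;> rfl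
    have hv2 : vix i' = i0'.val := by rcases hsh' with rfl | rfl <;> rfl
    have : i0 = i0' := Fin.ext (by rw [← hv1, ← hv2, hvv])
    rw [← hX0, ← hX0', this]
  have hPle : (univ.filter P).card ≤ n := by
    have hmap : ∀ i ∈ univ.filter P, vix i ∈ Finset.range n := by
      intro i hi
      obtain ⟨i0, hX0, hsh⟩ := (Finset.mem_filter.mp hi).2
      have hv1 : vix i = i0.val := by rcases hsh with rfl | rfl <;> rfl
      rw [hv1]
      exact Finset.mem_range.mpr i0.isLt
    have := Finset.card_le_card_of_injOn vix hmap hPinj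
    simpa using this
  have hple2 : ∑ i : SatAgent n m, (if P i then 1 else 2) ≤ 7 * n := by
    rw [← hsum]
    exact Finset.sum_le_sum (fun i _ => hlow i)
  have e1 : (∑ i : SatAgent n m, (if P i then 1 else 2)) + (univ.filter P).card = 8 * n := by
    have hpt : ∀ i : SatAgent n m, ((if P i then 1 else 2) + (if P i then 1 else 0)) = 2 := by
      intro i; split_ifs <;> rfl
    have : (∑ i : SatAgent n m, (if P i then 1 else 2)) + (∑ i : SatAgent n m, (if P i then 1 else 0)) = 8 * n := by
      rw [← Finset.sum_add_distrib]
      rw [Finset.sum_congr rfl (fun i _ => hpt i), Finset.sum_const, Finset.card_univ]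
      simp [Fintype.card_sum]
      omega
    rw [Finset.card_filter]
    exact this
  have hPn : (univ.filter P).card = n := by omega
  have hlowsum : (∑ i : SatAgent n m, (if P i then 1 else 2)) = ∑ i : SatAgent n m, (B i).card := by
    omega
  have heq : ∀ i, (B i).card = if P i then 1 else 2 := by
    have := (Finset.sum_eq_sum_iff_of_le (fun i _ => hlow i)).mp hlowsum
    intro i
    exact (this i (Finset.mem_univ i)).symm
  -- every clog is owned by one of its own sinks
  have hclog : ∀ i0 : Fin n, X (Sum.inr (Sum.inl i0)) = Sum.inl (Sum.inl i0) ∨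
      X (Sum.inr (Sum.inl i0)) = Sum.inl (Sum.inr i0) := by
    intro i0
    have himg : (univ.filter P).image vix = Finset.range n := by
      apply Finset.eq_of_subset_of_card_le
      · intro x hx
        obtain ⟨i, hi, rfl⟩ := Finset.mem_image.mp hx
        obtain ⟨i1, hX1, hsh⟩ := (Finset.mem_filter.mp hi).2
        have hv1 : vix i = i1.val := by rcases hsh with rfl | rfl <;> rfl
        rw [hv1]
        exact Finset.mem_range.mpr i1.isLt
      · rw [Finset.card_image_of_injOn hPinj, hPn, Finset.card_range]
    have : (i0 : ℕ) ∈ (univ.filter P).image vix := by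
      rw [himg]; exact Finset.mem_range.mpr i0.isLt
    obtain ⟨i, hiP, hvv⟩ := Finset.mem_image.mp this
    obtain ⟨i1, hX1, hsh⟩ := (Finset.mem_filter.mp hiP).2
    have hv1 : vix i = i1.val := by rcases hsh with rfl | rfl <;> rfl
    have hi10 : i1 = i0 := Fin.ext (by rw [← hv1, hvv])
    rw [hi10] at hX1
    rcases hsh with h | h
    · left; rw [hX1, h, hi10]
    · right; rw [hX1, h, hi10]
  set σ : Fin n → Bool :=
    fun i0 => decide (X (Sum.inr (Sum.inl i0)) = Sum.inl (Sum.inl i0)) with hσ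
  -- the sink opposite to the clog owner eats both copies of its literal
  have hsinkT : ∀ i0 : Fin n, σ i0 = true →
      ∀ cpy : Bool, X (Sum.inl (false, cpy, i0)) = Sum.inl (Sum.inr i0) := by
    intro i0 hs
    have hXc : X (Sum.inr (Sum.inl i0)) = Sum.inl (Sum.inl i0) := of_decide_eq_true hs
    have hPt : ¬ P (Sum.inl (Sum.inr i0)) := by
      rintro ⟨i1, hX1, h | h⟩
      · exact absurd h (by simp)
      · have hi : i1 = i0 := by
          have := (Sum.inl.injEq _ _).mp h
          exact (Sum.inr.injEq _ _).mp this |>.symm ▸ rfl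
        rw [hi, hXc] at hX1
        exact absurd hX1 (by simp)
    have hcard2 : (B (Sum.inl (Sum.inr i0))).card = 2 := by
      rw [heq, if_neg hPt]
    have hnoclog : Sum.inr (Sum.inl i0) ∉ B (Sum.inl (Sum.inr i0)) := by
      intro hmem
      have := (hmemB _ _).mp hmem
      rw [hXc] at this
      exact absurd this (by simp)
    have hle : ∀ o ∈ B (Sum.inl (Sum.inr i0)),
        satVal n m a b c C (Sum.inl (Sum.inr i0)) o ≤ b := by
      intro o ho
      rcases satVal_cases (Sum.inl (Sum.inr i0)) o with h | h | ⟨h, i1, rfl, hsh⟩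
      · rw [h]; linarith
      · rw [h]
      · exfalso
        rcases hsh with h' | h'
        · exact absurd h' (by simp)
        · have : i1 = i0 := by
            have := (Sum.inl.injEq _ _).mp h'
            exact ((Sum.inr.injEq _ _).mp this).symm
          rw [this] at ho
          exact hnoclog ho
    have hgt : ∀ o ∈ B (Sum.inl (Sum.inr i0)),
        a < satVal n m a b c C (Sum.inl (Sum.inr i0)) o := by
      intro o ho
      have hu := H (Sum.inl (Sum.inr i0))
      rw [hutil] at hu
      have hsplit := Finset.add_sum_erase _ (satVal n m a b c C (Sum.inl (Sum.inr i0))) ho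
      have herase : ∑ o' ∈ (B (Sum.inl (Sum.inr i0))).erase o,
          satVal n m a b c C (Sum.inl (Sum.inr i0)) o' ≤ b := by
        have hcount : ((B (Sum.inl (Sum.inr i0))).erase o).card = 1 := by
          rw [Finset.card_erase_of_mem ho, hcard2]
        have := Finset.sum_le_card_nsmul ((B (Sum.inl (Sum.inr i0))).erase o)
          (satVal n m a b c C (Sum.inl (Sum.inr i0))) b
          (fun o' ho' => hle o' (Finset.mem_of_mem_erase ho'))
        rw [hcount, one_nsmul] at this
        exact this
      linarith
    have hsub : B (Sum.inl (Sum.inr i0)) ⊆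
        {Sum.inl (false, false, i0), Sum.inl (false, true, i0)} := by
      intro o ho
      rcases val_neg_gt i0 o (hgt o ho) with rfl | ⟨cpy, rfl⟩
      · exact absurd ho hnoclog
      · cases cpy <;> simp
    have hBt : B (Sum.inl (Sum.inr i0)) =
        {Sum.inl (false, false, i0), Sum.inl (false, true, i0)} := by
      apply Finset.eq_of_subset_of_card_le hsub
      rw [hcard2]
      simpa using Finset.card_insert_le (Sum.inl (false, false, i0) : SatItem n m)
        {Sum.inl (false, true, i0)}
    intro cpy
    have : (Sum.inl (false, cpy, i0) : SatItem n m) ∈ B (Sum.inl (Sum.inr i0)) := by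
      rw [hBt]; cases cpy <;> simp
    exact (hmemB _ _).mp this
  have hsinkF : ∀ i0 : Fin n, σ i0 = false →
      ∀ cpy : Bool, X (Sum.inl (true, cpy, i0)) = Sum.inl (Sum.inl i0) := by
    intro i0 hs
    have hXc : X (Sum.inr (Sum.inl i0)) = Sum.inl (Sum.inr i0) := by
      rcases hclog i0 with h | h
      · exfalso
        rw [hσ] at hs
        simp only [decide_eq_false_iff_not] at hs
        exact hs h
      · exact h
    have hPt : ¬ P (Sum.inl (Sum.inl i0)) := by
      rintro ⟨i1, hX1, h | h⟩
      · have hi : i1 = i0 := by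
          have := (Sum.inl.injEq _ _).mp h
          exact ((Sum.inl.injEq _ _).mp this).symm
        rw [hi, hXc] at hX1
        exact absurd hX1 (by simp)
      · exact absurd h (by simp)
    have hcard2 : (B (Sum.inl (Sum.inl i0))).card = 2 := by
      rw [heq, if_neg hPt]
    have hnoclog : Sum.inr (Sum.inl i0) ∉ B (Sum.inl (Sum.inl i0)) := by
      intro hmem
      have := (hmemB _ _).mp hmem
      rw [hXc] at this
      exact absurd this (by simp)
    have hle : ∀ o ∈ B (Sum.inl (Sum.inl i0)),
        satVal n m a b c C (Sum.inl (Sum.inl i0)) o ≤ b := by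
      intro o ho
      rcases satVal_cases (Sum.inl (Sum.inl i0)) o with h | h | ⟨h, i1, rfl, hsh⟩
      · rw [h]; linarith
      · rw [h]
      · exfalso
        rcases hsh with h' | h'
        · have : i1 = i0 := by
            have := (Sum.inl.injEq _ _).mp h'
            exact ((Sum.inl.injEq _ _).mp this).symm
          rw [this] at ho
          exact hnoclog ho
        · exact absurd h' (by simp)
    have hgt : ∀ o ∈ B (Sum.inl (Sum.inl i0)),
        a < satVal n m a b c C (Sum.inl (Sum.inl i0)) o := by
      intro o ho
      have hu := H (Sum.inl (Sum.inl i0))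
      rw [hutil] at hu
      have hsplit := Finset.add_sum_erase _ (satVal n m a b c C (Sum.inl (Sum.inl i0))) ho
      have herase : ∑ o' ∈ (B (Sum.inl (Sum.inl i0))).erase o,
          satVal n m a b c C (Sum.inl (Sum.inl i0)) o' ≤ b := by
        have hcount : ((B (Sum.inl (Sum.inl i0))).erase o).card = 1 := by
          rw [Finset.card_erase_of_mem ho, hcard2]
        have := Finset.sum_le_card_nsmul ((B (Sum.inl (Sum.inl i0))).erase o)
          (satVal n m a b c C (Sum.inl (Sum.inl i0))) b
          (fun o' ho' => hle o' (Finset.mem_of_mem_erase ho'))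
        rw [hcount, one_nsmul] at this
        exact this
      linarith
    have hsub : B (Sum.inl (Sum.inl i0)) ⊆
        {Sum.inl (true, false, i0), Sum.inl (true, true, i0)} := by
      intro o ho
      rcases val_pos_gt i0 o (hgt o ho) with rfl | ⟨cpy, rfl⟩
      · exact absurd ho hnoclog
      · cases cpy <;> simp
    have hBt : B (Sum.inl (Sum.inl i0)) =
        {Sum.inl (true, false, i0), Sum.inl (true, true, i0)} := by
      apply Finset.eq_of_subset_of_card_le hsub
      rw [hcard2]
      simpa using Finset.card_insert_le (Sum.inl (true, false, i0) : SatItem n m)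
        {Sum.inl (true, true, i0)}
    intro cpy
    have : (Sum.inl (true, cpy, i0) : SatItem n m) ∈ B (Sum.inl (Sum.inl i0)) := by
      rw [hBt]; cases cpy <;> simp
    exact (hmemB _ _).mp this
  -- extract satisfaction
  refine ⟨σ, ?_⟩
  intro j
  have hPt : ¬ P (Sum.inr (Sum.inl j)) := by
    rintro ⟨i1, hX1, h | h⟩ <;> exact absurd h (by simp)
  have hcard2 : (B (Sum.inr (Sum.inl j))).card = 2 := by
    rw [heq, if_neg hPt]
  have hle : ∀ o ∈ B (Sum.inr (Sum.inl j)),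
      satVal n m a b c C (Sum.inr (Sum.inl j)) o ≤ b :=
    fun o _ => satVal_clause_le hab j o
  have hgt : ∀ o ∈ B (Sum.inr (Sum.inl j)),
      a < satVal n m a b c C (Sum.inr (Sum.inl j)) o := by
    intro o ho
    have hu := H (Sum.inr (Sum.inl j))
    rw [hutil] at hu
    have hsplit := Finset.add_sum_erase _ (satVal n m a b c C (Sum.inr (Sum.inl j))) ho
    have herase : ∑ o' ∈ (B (Sum.inr (Sum.inl j))).erase o,
        satVal n m a b c C (Sum.inr (Sum.inl j)) o' ≤ b := by
      have hcount : ((B (Sum.inr (Sum.inl j))).erase o).card = 1 := by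
        rw [Finset.card_erase_of_mem ho, hcard2]
      have := Finset.sum_le_card_nsmul ((B (Sum.inr (Sum.inl j))).erase o)
        (satVal n m a b c C (Sum.inr (Sum.inl j))) b
        (fun o' ho' => hle o' (Finset.mem_of_mem_erase ho'))
      rw [hcount, one_nsmul] at this
      exact this
    linarith
  obtain ⟨o1, o2, h12, hB2⟩ := Finset.card_eq_two.mp hcard2
  have ho1 : o1 ∈ B (Sum.inr (Sum.inl j)) := by rw [hB2]; simp
  have ho2 : o2 ∈ B (Sum.inr (Sum.inl j)) := by rw [hB2]; simp
  have key : ∀ o ∈ B (Sum.inr (Sum.inl j)), o ≠ Sum.inr (Sum.inr (Sum.inl j)) →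
      ∃ l ∈ C j, σ l.2 = l.1 := by
    intro o ho hne'
    rcases val_clause_gt j o (hgt o ho) with ⟨s, cpy, i1, rfl, hmem⟩ | rfl
    · refine ⟨(s, i1), hmem, ?_⟩
      by_contra hss
      have hXo : X (Sum.inl (s, cpy, i1)) = Sum.inr (Sum.inl j) := (hmemB _ _).mp ho
      cases s
      · have hσt : σ i1 = true := by
          cases h' : σ i1
          · exact absurd h' hss
          · rfl
        rw [hsinkT i1 hσt cpy] at hXo
        exact absurd hXo (by simp)
      · have hσt : σ i1 = false := by
          cases h' : σ i1
          · rfl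
          · exact absurd h' hss
        rw [hsinkF i1 hσt cpy] at hXo
        exact absurd hXo (by simp)
    · exact absurd rfl hne'
  by_cases h1 : o1 = Sum.inr (Sum.inr (Sum.inl j))
  · refine key o2 ho2 ?_
    intro h2
    exact h12 (h1.trans h2.symm)
  · exact key o1 ho1 h1

/-- The allocation built from a satisfying assignment. -/
def satAlloc (n m : ℕ) (σ : Fin n → Bool)
    (E : (Fin m ⊕ Fin (2 * n - m)) ≃ Bool × Fin n) :
    SatItem n m → SatAgent n m
  | Sum.inl (s, cpy, i1) =>
      if σ i1 = s then Sum.inr (E.symm (cpy, i1))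
      else if s = true then Sum.inl (Sum.inl i1) else Sum.inl (Sum.inr i1)
  | Sum.inr (Sum.inl i1) =>
      if σ i1 = true then Sum.inl (Sum.inl i1) else Sum.inl (Sum.inr i1)
  | Sum.inr (Sum.inr (Sum.inl k)) => Sum.inr (Sum.inl k)
  | Sum.inr (Sum.inr (Sum.inr d)) => Sum.inr (Sum.inr d)

lemma dirA (ha : 0 ≤ a) (hab : a < b) (hbc : b < c) (hc2b : 2 * b ≤ c)
    (hcard : ∀ j, (C j).card = 3)
    (hpos : ∀ i : Fin n, (univ.filter (fun j => (true, i) ∈ C j)).card = 2)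
    (hneg : ∀ i : Fin n, (univ.filter (fun j => (false, i) ∈ C j)).card = 2)
    (σ : Fin n → Bool) (hσ : ∀ j : Fin m, ∃ l ∈ C j, σ l.2 = l.1) :
    ∃ X : SatItem n m → SatAgent n m,
      ∀ i : SatAgent n m, 2 * b ≤ satUtil n m a b c C X i := by
  classical
  have h34 : 3 * m = 4 * n := key3m4n hcard hpos hneg
  have hm : m ≤ 2 * n := by omega
  have hlit : ∀ (s : Bool) (i : Fin n),
      (univ.filter (fun j => (s, i) ∈ C j)).card = 2 := by
    intro s i; cases s
    · exact hneg i
    · exact hpos i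
  choose l hl1 hl2 using hσ
  set w : Fin m → Fin n := fun j => (l j).2 with hw
  have hmem : ∀ j, (σ (w j), w j) ∈ C j := by
    intro j
    have h : (σ (w j), w j) = l j := by
      show (σ ((l j).2), (l j).2) = l j
      rw [hl2 j]
    rw [h]; exact hl1 j
  set bit : Fin m → Bool := fun j => decide (∃ j', j' < j ∧ w j' = w j) with hbit
  set h : Fin m → Bool × Fin n := fun j => (bit j, w j) with hh
  have key : ∀ {j j' : Fin m}, j < j' → w j = w j' → bit j = bit j' → False := by
    intro j j' hlt hww hbb
    have hb' : bit j' = true := decide_eq_true ⟨j, hlt, hww⟩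
    have hb : bit j = true := by rw [hbb, hb']
    obtain ⟨j2, hj2, hww2⟩ := of_decide_eq_true hb
    have hsubset : ({j2, j, j'} : Finset (Fin m)) ⊆
        univ.filter (fun t => (σ (w j'), w j') ∈ C t) := by
      intro t ht
      simp only [Finset.mem_insert, Finset.mem_singleton] at ht
      simp only [Finset.mem_filter, Finset.mem_univ, true_and]
      rcases ht with rfl | rfl | rfl
      · have hwt : w t = w j' := by rw [hww2, hww]
        rw [← hwt]; exact hmem t
      · have hwt : w t = w j' := hww
        rw [← hwt]; exact hmem t
      · exact hmem t
    have hc3 : ({j2, j, j'} : Finset (Fin m)).card = 3 := by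
      have h1 : j2 ≠ j := ne_of_lt hj2
      have h2 : j2 ≠ j' := ne_of_lt (lt_trans hj2 hlt)
      have h3 : j ≠ j' := ne_of_lt hlt
      rw [Finset.card_insert_of_notMem (by simp [h1, h2]),
        Finset.card_insert_of_notMem (by simp [h3]), Finset.card_singleton]
    have hle := Finset.card_le_card hsubset
    rw [hc3, hlit (σ (w j')) (w j')] at hle
    omega
  have hinj : Function.Injective h := by
    intro j j' hjj
    simp only [hh, Prod.mk.injEq] at hjj
    obtain ⟨hbb, hww⟩ := hjj
    rcases lt_trichotomy j j' with hlt | heq | hlt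
    · exact (key hlt hww hbb).elim
    · exact heq
    · exact (key hlt hww.symm hbb.symm).elim
  have himgcard : (univ.image h).card = m := by
    rw [Finset.card_image_of_injective _ hinj, Finset.card_univ, Fintype.card_fin]
  have hcompl : ((univ.image h)ᶜ : Finset (Bool × Fin n)).card = 2 * n - m := by
    rw [Finset.card_compl, himgcard]
    simp [Fintype.card_prod]
  set e2 : Fin (2 * n - m) ≃ {x // x ∈ ((univ.image h)ᶜ : Finset (Bool × Fin n))} :=
    (Finset.equivFinOfCardEq hcompl).symm with he2
  set F : Fin m ⊕ Fin (2 * n - m) → Bool × Fin n :=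
    Sum.elim h (fun d => ((e2 d : Bool × Fin n))) with hF
  have hFinj : Function.Injective F := by
    have hmemc : ∀ d, ((e2 d : Bool × Fin n)) ∉ univ.image h := by
      intro d
      have := (e2 d).2
      rw [Finset.mem_compl] at this
      exact this
    intro u u' he
    rcases u with j | d <;> rcases u' with j' | d'
    · exact congrArg Sum.inl (hinj he)
    · exfalso
      have hji : h j = ((e2 d' : Bool × Fin n)) := he
      exact hmemc d' (hji ▸ Finset.mem_image_of_mem h (Finset.mem_univ j))
    · exfalso
      have hji : h j' = ((e2 d : Bool × Fin n)) := he.symm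
      exact hmemc d (hji ▸ Finset.mem_image_of_mem h (Finset.mem_univ j'))
    · exact congrArg Sum.inr (e2.injective (Subtype.ext he))
  have hFbij : Function.Bijective F := by
    refine (Fintype.bijective_iff_injective_and_card F).mpr ⟨hFinj, ?_⟩
    simp [Fintype.card_sum, Fintype.card_prod]
    omega
  set E : (Fin m ⊕ Fin (2 * n - m)) ≃ Bool × Fin n := Equiv.ofBijective F hFbij with hE
  have hEl : ∀ k : Fin m, E (Sum.inl k) = (bit k, w k) := fun k => rfl
  refine ⟨satAlloc n m σ E, ?_⟩
  intro i
  rcases i with (i0 | i0) | (k | d)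
  · -- pos sink
    by_cases hs : σ i0 = true
    · have hX : satAlloc n m σ E (Sum.inr (Sum.inl i0)) = Sum.inl (Sum.inl i0) := by
        simp only [satAlloc]
        rw [if_pos hs]
      have h1 := util_ge_one (C := C) hab hbc ha (satAlloc n m σ E) hX
      have hval : satVal n m a b c C (Sum.inl (Sum.inl i0)) (Sum.inr (Sum.inl i0)) = c := by
        simp [satVal]
      rw [hval] at h1
      linarith
    · have hX1 : satAlloc n m σ E (Sum.inl (true, false, i0)) = Sum.inl (Sum.inl i0) := by
        simp only [satAlloc]
        rw [if_neg hs]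
        rfl
      have hX2 : satAlloc n m σ E (Sum.inl (true, true, i0)) = Sum.inl (Sum.inl i0) := by
        simp only [satAlloc]
        rw [if_neg hs]
        rfl
      have h12 : (Sum.inl (true, false, i0) : SatItem n m) ≠ Sum.inl (true, true, i0) := by
        simp
      have hp := util_ge_pair (C := C) hab hbc ha (satAlloc n m σ E) h12 hX1 hX2
      have hv1 : satVal n m a b c C (Sum.inl (Sum.inl i0)) (Sum.inl (true, false, i0)) = b := by
        simp [satVal]
      have hv2 : satVal n m a b c C (Sum.inl (Sum.inl i0)) (Sum.inl (true, true, i0)) = b := by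
        simp [satVal]
      rw [hv1, hv2] at hp
      linarith
  · -- neg sink
    by_cases hs : σ i0 = true
    · have hsf : ¬ (σ i0 = false) := by rw [hs]; simp
      have hX1 : satAlloc n m σ E (Sum.inl (false, false, i0)) = Sum.inl (Sum.inr i0) := by
        simp only [satAlloc]
        rw [if_neg hsf]
        rfl
      have hX2 : satAlloc n m σ E (Sum.inl (false, true, i0)) = Sum.inl (Sum.inr i0) := by
        simp only [satAlloc]
        rw [if_neg hsf]
        rfl
      have h12 : (Sum.inl (false, false, i0) : SatItem n m) ≠ Sum.inl (false, true, i0) := by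
        simp
      have hp := util_ge_pair (C := C) hab hbc ha (satAlloc n m σ E) h12 hX1 hX2
      have hv1 : satVal n m a b c C (Sum.inl (Sum.inr i0)) (Sum.inl (false, false, i0)) = b := by
        simp [satVal]
      have hv2 : satVal n m a b c C (Sum.inl (Sum.inr i0)) (Sum.inl (false, true, i0)) = b := by
        simp [satVal]
      rw [hv1, hv2] at hp
      linarith
    · have hX : satAlloc n m σ E (Sum.inr (Sum.inl i0)) = Sum.inl (Sum.inr i0) := by
        simp only [satAlloc]
        rw [if_neg hs]
      have h1 := util_ge_one (C := C) hab hbc ha (satAlloc n m σ E) hX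
      have hval : satVal n m a b c C (Sum.inl (Sum.inr i0)) (Sum.inr (Sum.inl i0)) = c := by
        simp [satVal]
      rw [hval] at h1
      linarith
  · -- clause agent
    have hcnd : σ (w k) = (l k).1 := hl2 k
    have hsymm : E.symm (bit k, w k) = Sum.inl k := by
      rw [← hEl k, Equiv.symm_apply_apply]
    have hX2 : satAlloc n m σ E (Sum.inl ((l k).1, bit k, w k)) = Sum.inr (Sum.inl k) := by
      simp only [satAlloc]
      rw [if_pos hcnd, hsymm]
    have hX1 : satAlloc n m σ E (Sum.inr (Sum.inr (Sum.inl k))) = Sum.inr (Sum.inl k) := rfl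
    have h12 : (Sum.inr (Sum.inr (Sum.inl k)) : SatItem n m) ≠
        Sum.inl ((l k).1, bit k, w k) := by simp
    have hp := util_ge_pair (C := C) hab hbc ha (satAlloc n m σ E) h12 hX1 hX2
    have hv1 : satVal n m a b c C (Sum.inr (Sum.inl k)) (Sum.inr (Sum.inr (Sum.inl k))) = b := by
      simp [satVal]
    have hv2 : satVal n m a b c C (Sum.inr (Sum.inl k)) (Sum.inl ((l k).1, bit k, w k)) = b := by
      show (if ((l k).1, w k) ∈ C k then b else a) = b
      rw [if_pos (hl1 k)]
    rw [hv1, hv2] at hp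
    linarith
  · -- dummy agent
    have hsymm : E.symm ((E (Sum.inr d)).1, (E (Sum.inr d)).2) = Sum.inr d := by
      show E.symm (E (Sum.inr d)) = Sum.inr d
      exact Equiv.symm_apply_apply E _
    have hX2 : satAlloc n m σ E
        (Sum.inl (σ (E (Sum.inr d)).2, (E (Sum.inr d)).1, (E (Sum.inr d)).2)) =
        Sum.inr (Sum.inr d) := by
      simp only [satAlloc]
      simp [hsymm]
    have hX1 : satAlloc n m σ E (Sum.inr (Sum.inr (Sum.inr d))) = Sum.inr (Sum.inr d) := rfl
    have h12 : (Sum.inr (Sum.inr (Sum.inr d)) : SatItem n m) ≠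
        Sum.inl (σ (E (Sum.inr d)).2, (E (Sum.inr d)).1, (E (Sum.inr d)).2) := by simp
    have hp := util_ge_pair (C := C) hab hbc ha (satAlloc n m σ E) h12 hX1 hX2
    have hv1 : satVal n m a b c C (Sum.inr (Sum.inr d)) (Sum.inr (Sum.inr (Sum.inr d))) = b := by
      simp [satVal]
    have hv2 : satVal n m a b c C (Sum.inr (Sum.inr d))
        (Sum.inl (σ (E (Sum.inr d)).2, (E (Sum.inr d)).1, (E (Sum.inr d)).2)) = b := by
      simp [satVal]
    rw [hv1, hv2] at hp
    linarith

end aux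
/-- Fix integers `0 ≤ a < b < c` with `c ≥ 2b`, and a 2P2N-3SAT instance `φ` with `n`
variables and clauses `C 0, …, C (m-1)`, each a set of exactly three literals, in which
every variable occurs in exactly two clauses positively and in exactly two clauses
negatively. Then `φ` is satisfiable iff the allocation instance `I(φ)` admits an
allocation of egalitarian welfare at least `2b`; moreover, if `φ` is unsatisfiable,
every allocation of `I(φ)` has egalitarian welfare at most `b + a`. -/
theorem stmt7 (a b c : ℤ) (ha : 0 ≤ a) (hab : a < b) (hbc : b < c) (hc2b : 2 * b ≤ c)
    (n m : ℕ) (C : Fin m → Finset (Bool × Fin n))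
    (hcard : ∀ j, (C j).card = 3)
    (hpos : ∀ i : Fin n, (univ.filter (fun j => (true, i) ∈ C j)).card = 2)
    (hneg : ∀ i : Fin n, (univ.filter (fun j => (false, i) ∈ C j)).card = 2) :
    ((∃ σ : Fin n → Bool, ∀ j : Fin m, ∃ l ∈ C j, σ l.2 = l.1) ↔
      ∃ X : SatItem n m → SatAgent n m,
        ∀ i : SatAgent n m, 2 * b ≤ satUtil n m a b c C X i) ∧
    ((¬ ∃ σ : Fin n → Bool, ∀ j : Fin m, ∃ l ∈ C j, σ l.2 = l.1) →
      ∀ X : SatItem n m → SatAgent n m,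
        ∃ i : SatAgent n m, satUtil n m a b c C X i ≤ b + a) := by
  constructor
  · constructor
    · rintro ⟨σ, hσ⟩
      exact dirA ha hab hbc hc2b hcard hpos hneg σ hσ
    · rintro ⟨X, hX⟩
      by_contra hns
      exact hns (dirB ha hab hbc hcard hpos hneg X
        (fun i => lt_of_lt_of_le (by linarith) (hX i)))
  · intro hns X
    by_contra hno
    push_neg at hno
    exact hns (dirB ha hab hbc hcard hpos hneg X hno)
end
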